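/- Let k ≥ 2 and t ≥ 2 be integers, let H = (V, E) be a k-uniform hypergraph, and regard V as a first-order structure in the language with a single k-ary relation symbol R, interpreted by: R(v_1, …, v_k) holds if and only if v_1, …, v_k are distinct and {v_1, …, v_k} ∈ E. Let M ⊆ V be the universe of an elementary substructure of this structure, and let f ⊆ M be a set with |f| ≤ k − 1 which is not the root of a delta system of size t in H. Then there is no edge e ∈ E with e ∩ M = f. -/

import Mathlib

open Cardinal FirstOrder

universe u

/-- `d` is the root of a delta system of size `t` in the hypergraph with edge set `E`. -/
def IsRootOfDelta {V : Type u} (E : Set (Set V)) (t : ℕ) (d : Set V) : Prop :=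
  ∃ D : Set (Set V), D ⊆ E ∧ D.ncard = t ∧ ⋂₀ D = d ∧
    ∀ e ∈ D, ∀ e' ∈ D, e ≠ e' → e ∩ e' = d

/-- The first-order language with a single `k`-ary relation symbol. -/
def hyperLang (k : ℕ) : FirstOrder.Language :=
  { Functions := fun _ => Empty
    Relations := fun n => PLift (n = k) }

/-- The `hyperLang k`-structure on the vertex set of a `k`-uniform hypergraph `(V, E)`:
the relation symbol holds of a tuple `v₁, …, v_k` iff the `vᵢ` are distinct and
`{v₁, …, v_k} ∈ E`. -/
def hyperStructure {V : Type u} (k : ℕ) (E : Set (Set V)) : (hyperLang k).Structure V where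
  funMap := fun f _ => f.elim
  RelMap := fun _ v => Function.Injective v ∧ Set.range v ∈ E

/-- The induced structure on a subset `M` of the vertex set. -/
def hyperSubStructure {V : Type u} (k : ℕ) (E : Set (Set V)) (M : Set V) :
    (hyperLang k).Structure M where
  funMap := fun f _ => f.elim
  RelMap := fun _ v => Function.Injective (fun i => (v i : V)) ∧
    Set.range (fun i => (v i : V)) ∈ E

/-- `M` is (the universe of) an elementary substructure of `(V; R)`: every first-order
formula with parameters from `M` holds in the induced structure on `M` iff it holds
in `V`. -/
def IsElementarySet {V : Type u} (k : ℕ) (E : Set (Set V)) (M : Set V) : Prop :=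
  ∀ (n : ℕ) (φ : (hyperLang k).Formula (Fin n)) (x : Fin n → M),
    @FirstOrder.Language.Formula.Realize (hyperLang k) M (hyperSubStructure k E M)
        (Fin n) φ x ↔
      @FirstOrder.Language.Formula.Realize (hyperLang k) V (hyperStructure k E)
        (Fin n) φ (fun i => (x i : V))

open FirstOrder.Language in
/-- The formula asserting (with parameters `f₁,…,f_m` and `s` edges given by their
`k`-tuples of vertices) that there exist `p` further vertices which together with
the `fᵢ` form an edge, and which avoid each of the `s` given edges. -/
noncomputable def sunFormula (k m p s : ℕ) (hmp : m + p = k) :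
    (hyperLang k).Formula (Fin m ⊕ (Fin s × Fin k)) :=
  ((Relations.boundedFormula (show (hyperLang k).Relations k from PLift.up rfl)
      (fun i => Term.var (((finSumFinEquiv.trans (finCongr hmp)).symm i).elim
        (fun a => Sum.inl (Sum.inl a)) (fun b => Sum.inr b)))) ⊓
    (BoundedFormula.iInf
      (fun q : Fin p × Fin s × Fin k =>
        ∼(Term.bdEqual (Term.var (Sum.inr q.1)) (Term.var (Sum.inl (Sum.inr q.2))))))).exs

open FirstOrder.Language in
lemma realize_sunFormula {k m p s : ℕ} (hmp : m + p = k) {W : Type u}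
    (Str : (hyperLang k).Structure W) (v : Fin m ⊕ (Fin s × Fin k) → W) :
    @Formula.Realize _ W Str _ (sunFormula k m p s hmp) v ↔
      ∃ xs : Fin p → W,
        (@Structure.RelMap _ W Str k (PLift.up rfl)
          ((Sum.elim (fun a => v (Sum.inl a)) xs) ∘ (finSumFinEquiv.trans (finCongr hmp)).symm)) ∧
        ∀ (j : Fin p) (i : Fin s) (l : Fin k), xs j ≠ v (Sum.inr (i, l)) := by
  letI := Str
  have htuple : ∀ (xs : Fin p → W),
      (fun i => Sum.elim v xs (Sum.elim (fun a => Sum.inl (Sum.inl a)) (fun b => Sum.inr b)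
        ((finSumFinEquiv.trans (finCongr hmp)).symm i))) =
      (Sum.elim (fun a => v (Sum.inl a)) xs) ∘ (finSumFinEquiv.trans (finCongr hmp)).symm := by
    intro xs
    funext i
    cases h : (finSumFinEquiv.trans (finCongr hmp)).symm i <;>
      simp only [Function.comp_apply, h, Sum.elim_inl, Sum.elim_inr]
  simp only [sunFormula, BoundedFormula.realize_exs, BoundedFormula.realize_inf,
    BoundedFormula.realize_rel, BoundedFormula.realize_iInf, Finset.mem_univ, forall_true_left,
    BoundedFormula.realize_not, BoundedFormula.realize_bdEqual, Term.realize, Sum.elim_inr,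
    Sum.elim_inl, Prod.forall]
  constructor
  · rintro ⟨xs, h1, h2⟩
    refine ⟨xs, ?_, fun j i l => h2 j i l⟩
    convert h1 using 2
    rw [← htuple xs]
    exact Iff.rfl
  · rintro ⟨xs, h1, h2⟩
    refine ⟨xs, ?_, fun j i l => h2 j i l⟩
    convert h1 using 2
    rw [← htuple xs]
    exact Iff.rfl

/-- Enumerate a finite set of known cardinality by an injective tuple. -/
lemma exists_enum_of_ncard {V : Type u} {S : Set V} (hS : S.Finite) {n : ℕ} (h : S.ncard = n) :
    ∃ u : Fin n → V, Function.Injective u ∧ Set.range u = S := by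
  have hcard : hS.toFinset.card = n := by
    rw [← Set.ncard_eq_toFinset_card S hS, h]
  let eqv := hS.toFinset.equivFinOfCardEq hcard
  refine ⟨fun i => (eqv.symm i : V), ?_, ?_⟩
  · exact Subtype.coe_injective.comp eqv.symm.injective
  · ext x
    simp only [Set.mem_range]
    constructor
    · rintro ⟨i, rfl⟩
      exact hS.mem_toFinset.mp (eqv.symm i).2
    · intro hx
      exact ⟨eqv ⟨x, hS.mem_toFinset.mpr hx⟩, by simp⟩

open FirstOrder.Language in
lemma relMap_hyperStructure_iff {V : Type u} (k n : ℕ) (E : Set (Set V))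
    (r : (hyperLang k).Relations n) (v : Fin n → V) :
    @Structure.RelMap _ V (hyperStructure k E) n r v ↔
      Function.Injective v ∧ Set.range v ∈ E := Iff.rfl

open FirstOrder.Language in
lemma relMap_hyperSubStructure_iff {V : Type u} (k n : ℕ) (E : Set (Set V)) (M : Set V)
    (r : (hyperLang k).Relations n) (v : Fin n → M) :
    @Structure.RelMap _ M (hyperSubStructure k E M) n r v ↔
      Function.Injective (fun i => (v i : V)) ∧ Set.range (fun i => (v i : V)) ∈ E := Iff.rfl

open FirstOrder.Language in
lemma exists_sunflower_family {V : Type u} (k : ℕ) (hk : 0 < k)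
    (E : Set (Set V)) (hUnif : ∀ e ∈ E, e.ncard = k)
    (M : Set V) (hM : IsElementarySet k E M)
    (f : Set V) (hfM : f ⊆ M) (hfin : f.Finite) (hfcard : f.ncard < k)
    (e : Set V) (he : e ∈ E) (heM : e ∩ M = f) :
    ∀ s : ℕ, ∃ A : Fin s → Set V,
      (∀ i, A i ∈ E) ∧ (∀ i, A i ⊆ M) ∧ (∀ i, f ⊆ A i) ∧
      (∀ i j, i ≠ j → A i ∩ A j = f) := by
  classical
  letI : (hyperLang k).Structure V := hyperStructure k E
  letI : (hyperLang k).Structure M := hyperSubStructure k E M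
  set m := f.ncard with hm
  set p := k - m with hp
  have hmp : m + p = k := by omega
  obtain ⟨u0, hu0inj, hu0range⟩ := exists_enum_of_ncard hfin hm.symm
  set eqk : (Fin m ⊕ Fin p) ≃ Fin k := finSumFinEquiv.trans (finCongr hmp) with heqk
  have u_mem : ∀ a : Fin m, u0 a ∈ M := fun a => hfM (by rw [← hu0range]; exact Set.mem_range_self a)
  set u : Fin m → M := fun a => ⟨u0 a, u_mem a⟩ with hu
  have hfe : f ⊆ e := heM ▸ Set.inter_subset_left
  have hefin : e.Finite := by
    by_contra h
    have h0 := Set.Infinite.ncard h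
    rw [hUnif e he] at h0
    omega
  have hdiff : (e \ f).ncard = p := by
    rw [Set.ncard_diff hfe hfin, hUnif e he]
  obtain ⟨w0, hw0inj, hw0range⟩ := exists_enum_of_ncard (hefin.diff (t := f)) hdiff
  suffices h : ∀ s : ℕ, ∃ g : Fin s → (Fin k → M),
      (∀ i, Set.range (fun l => (g i l : V)) ∈ E) ∧
      (∀ i, f ⊆ Set.range (fun l => (g i l : V))) ∧
      (∀ i j, i ≠ j → Set.range (fun l => (g i l : V)) ∩ Set.range (fun l => (g j l : V)) = f) by
    intro s
    obtain ⟨g, h1, h2, h3⟩ := h s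
    exact ⟨fun i => Set.range (fun l => (g i l : V)), h1,
      fun i => Set.range_subset_iff.mpr (fun l => (g i l).2), h2, h3⟩
  intro s
  induction s with
  | zero => exact ⟨fun i => i.elim0, fun i => i.elim0, fun i => i.elim0, fun i => i.elim0⟩
  | succ s ih =>
    obtain ⟨g, hgE, hgf, hgpair⟩ := ih
    set eqα : (Fin m ⊕ (Fin s × Fin k)) ≃ Fin (m + s * k) :=
      (Equiv.sumCongr (Equiv.refl (Fin m)) finProdFinEquiv).trans finSumFinEquiv with heqα
    set params : (Fin m ⊕ (Fin s × Fin k)) → M := Sum.elim u (fun q => g q.1 q.2) with hparams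
    have key := hM (m + s * k) ((sunFormula k m p s hmp).relabel eqα) (params ∘ eqα.symm)
    rw [Formula.realize_relabel, Formula.realize_relabel] at key
    have hcomp1 : (params ∘ ⇑eqα.symm) ∘ ⇑eqα = params := by
      funext a; simp
    have hcomp2 : (fun i => ((params ∘ ⇑eqα.symm) i : V)) ∘ ⇑eqα = fun a => (params a : V) := by
      funext a; simp
    rw [hcomp1, hcomp2] at key
    rw [realize_sunFormula hmp (hyperSubStructure k E M) params,
        realize_sunFormula hmp (hyperStructure k E) (fun a => (params a : V))] at key
    -- the V-side witness: the edge `e` itself, enumerated as `u0 ++ w0`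
    have hV : ∃ xs : Fin p → V,
        (@Structure.RelMap (hyperLang k) V (hyperStructure k E) k (PLift.up rfl)
          (Sum.elim (fun a => ((params (Sum.inl a) : M) : V)) xs ∘ ⇑eqk.symm)) ∧
        ∀ (j : Fin p) (i : Fin s) (l : Fin k), xs j ≠ ((params (Sum.inr (i, l)) : M) : V) := by
      refine ⟨w0, ?_, ?_⟩
      · show Function.Injective
            ((Sum.elim (fun a => ((params (Sum.inl a) : M) : V)) w0) ∘ ⇑eqk.symm) ∧
          Set.range ((Sum.elim (fun a => ((params (Sum.inl a) : M) : V)) w0) ∘ ⇑eqk.symm) ∈ E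
        have hcu : (fun a : Fin m => ((params (Sum.inl a) : M) : V)) = u0 := rfl
        constructor
        · have hinj : Function.Injective
              (Sum.elim (fun a => ((params (Sum.inl a) : M) : V)) w0) := by
            rw [hcu]
            refine Function.Injective.sumElim hu0inj hw0inj ?_
            intro a b hab
            have h1 : u0 a ∈ f := by rw [← hu0range]; exact Set.mem_range_self a
            have h2 : w0 b ∈ e \ f := by rw [← hw0range]; exact Set.mem_range_self b
            exact h2.2 (hab ▸ h1)
          exact hinj.comp eqk.symm.injective
        · rw [eqk.symm.surjective.range_comp, Set.Sum.elim_range, hcu, hu0range, hw0range,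
            Set.union_diff_cancel hfe]
          exact he
      · -- the new vertices avoid the old edges
        intro j i l hEq
        have h2 : w0 j ∈ e \ f := by rw [← hw0range]; exact Set.mem_range_self j
        have h3 : ((params (Sum.inr (i, l)) : M) : V) ∈ M := (params (Sum.inr (i, l))).2
        have h4 : w0 j ∈ e ∩ M := ⟨h2.1, hEq ▸ h3⟩
        rw [heM] at h4
        exact h2.2 h4
    obtain ⟨ys, hrel, hneq⟩ := key.mpr hV
    -- extract the new edge inside M
    set wM : Fin k → M := (Sum.elim (fun a => params (Sum.inl a)) ys) ∘ ⇑eqk.symm with hwM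
    have hrel' : Function.Injective (fun i => ((wM i : M) : V)) ∧
        Set.range (fun i => ((wM i : M) : V)) ∈ E := hrel
    have hwcoe : (fun i => ((wM i : M) : V)) = (Sum.elim u0 (fun b => (ys b : V))) ∘ ⇑eqk.symm := by
      funext i
      rcases h : eqk.symm i with a | b <;>
        simp only [hwM, Function.comp_apply, h, Sum.elim_inl, Sum.elim_inr] <;> rfl
    have hAnewE : Set.range ((Sum.elim u0 (fun b => (ys b : V))) ∘ ⇑eqk.symm) ∈ E := by
      have h5 := hrel'.2
      rwa [hwcoe] at h5
    have hAnewRange : Set.range ((Sum.elim u0 (fun b => (ys b : V))) ∘ ⇑eqk.symm)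
        = f ∪ Set.range (fun b => (ys b : V)) := by
      rw [eqk.symm.surjective.range_comp, Set.Sum.elim_range, hu0range]
    have hys_notin : ∀ (b : Fin p) (i : Fin s),
        ((ys b : V)) ∉ Set.range (fun l => (g i l : V)) := by
      rintro b i ⟨l, hl⟩
      exact hneq b i l (Subtype.coe_injective hl).symm
    have hnewold : ∀ i : Fin s,
        Set.range ((Sum.elim u0 (fun b => (ys b : V))) ∘ ⇑eqk.symm)
          ∩ Set.range (fun l => (g i l : V)) = f := by
      intro i
      apply subset_antisymm
      · rintro x ⟨hx1, hx2⟩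
        rw [hAnewRange] at hx1
        rcases hx1 with hx1 | ⟨b, rfl⟩
        · exact hx1
        · exact absurd hx2 (hys_notin b i)
      · intro x hx
        exact ⟨hAnewRange ▸ Set.mem_union_left _ hx, hgf i hx⟩
    have hr0 : Set.range (fun l => ((Fin.cons wM g : Fin (s + 1) → Fin k → M) 0 l : V))
        = Set.range ((Sum.elim u0 (fun b => (ys b : V))) ∘ ⇑eqk.symm) := by
      rw [show (fun l => ((Fin.cons wM g : Fin (s + 1) → Fin k → M) 0 l : V))
          = fun i => ((wM i : M) : V) by simp only [Fin.cons_zero], hwcoe]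
    have hrsucc : ∀ i : Fin s,
        (fun l => ((Fin.cons wM g : Fin (s + 1) → Fin k → M) i.succ l : V))
          = fun l => (g i l : V) := by
      intro i; simp only [Fin.cons_succ]
    refine ⟨Fin.cons wM g, ?_, ?_, ?_⟩
    · intro i
      induction i using Fin.cases with
      | zero => rw [hr0]; exact hAnewE
      | succ i => rw [hrsucc]; exact hgE i
    · intro i
      induction i using Fin.cases with
      | zero => rw [hr0, hAnewRange]; exact Set.subset_union_left
      | succ i => rw [hrsucc]; exact hgf i
    · intro i j hij
      induction i using Fin.cases with
      | zero =>
        induction j using Fin.cases with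
        | zero => exact absurd rfl hij
        | succ j => rw [hr0, hrsucc]; exact hnewold j
      | succ i =>
        induction j using Fin.cases with
        | zero => rw [hr0, hrsucc, Set.inter_comm]; exact hnewold i
        | succ j =>
          rw [hrsucc, hrsucc]
          exact hgpair i j (fun h => hij (by rw [h]))

theorem no_edge_meeting_elementary_in_nonroot {V : Type u} (k t : ℕ)
    (hk : 2 ≤ k) (ht : 2 ≤ t)
    (E : Set (Set V)) (hUnif : ∀ e ∈ E, e.ncard = k)
    (M : Set V) (hM : IsElementarySet k E M)
    (f : Set V) (hfM : f ⊆ M) (hfin : f.Finite) (hfcard : f.ncard ≤ k - 1)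
    (hnotroot : ¬ IsRootOfDelta E t f) :
    ¬ ∃ e ∈ E, e ∩ M = f := by
  rintro ⟨e, he, heM⟩
  apply hnotroot
  have hfk : f.ncard < k := by omega
  obtain ⟨A, hAE, hAM, hAf, hApair⟩ :=
    exists_sunflower_family k (by omega) E hUnif M hM f hfM hfin hfk e he heM (t - 1)
  have hfe : f ⊆ e := heM ▸ Set.inter_subset_left
  have heA : ∀ i, e ∩ A i = f := by
    intro i
    apply subset_antisymm
    · intro x hx
      rw [← heM]
      exact ⟨hx.1, hAM i hx.2⟩
    · intro x hx
      exact ⟨hfe hx, hAf i hx⟩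
  have hAcard : ∀ i, (A i).ncard = k := fun i => hUnif _ (hAE i)
  have hAne : ∀ i, A i ≠ f := by
    intro i h
    have h2 := hAcard i
    rw [h] at h2
    omega
  have hAinj : Function.Injective A := by
    intro i j hij
    by_contra hne
    have h2 := hApair i j hne
    rw [hij, Set.inter_self] at h2
    exact hAne j h2
  have henotin : e ∉ Set.range A := by
    rintro ⟨i, hi⟩
    have h2 := heA i
    rw [hi, Set.inter_self] at h2
    have h3 := hUnif e he
    rw [h2] at h3
    omega
  refine ⟨insert e (Set.range A), ?_, ?_, ?_, ?_⟩
  · intro x hx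
    rcases hx with rfl | ⟨i, rfl⟩
    · exact he
    · exact hAE i
  · rw [Set.ncard_insert_of_notMem henotin (Set.finite_range A)]
    have h2 : (Set.range A).ncard = t - 1 := by
      rw [← Set.image_univ, Set.ncard_image_of_injective _ hAinj, Set.ncard_univ]
      simp
    rw [h2]
    omega
  · apply subset_antisymm
    · intro x hx
      have hx1 : x ∈ e := hx _ (Set.mem_insert _ _)
      have hx2 : x ∈ A ⟨0, by omega⟩ := hx _ (Set.mem_insert_of_mem _ (Set.mem_range_self _))
      rw [← heA ⟨0, by omega⟩]
      exact ⟨hx1, hx2⟩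
    · intro x hx S hS
      rcases hS with rfl | ⟨i, rfl⟩
      · exact hfe hx
      · exact hAf i hx
  · intro e1 he1 e2 he2 hne
    rcases he1 with rfl | ⟨i, rfl⟩ <;> rcases he2 with rfl | ⟨j, rfl⟩
    · exact absurd rfl hne
    · exact heA j
    · rw [Set.inter_comm]; exact heA i
    · exact hApair i j (fun h => hne (congrArg A h))
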